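/- arXiv:2503.02116 — 2 statements merged into one kernel-verified Lean document; each statement's English description precedes it below -/
import Mathlib

section
/- Let π ∈ (0,1)^n, V(x) the KL divergence between g_π and g_x, and f the mean-field vector field f_i(x) = ∑_r g_π(r) f̃_i(r,x). Then for every x ∈ (0,1)^n, ⟨∇V(x), f(x)⟩ = − ∑_{i=1}^n f_i(x)^2/(x_i(1−x_i)) ≤ 0, with equality if and only if f(x) = 0. -/
open Real Finset

/-- Sign of a Boolean: `true ↦ +1`, `false ↦ -1`. -/
def sg (b : Bool) : ℝ := if b then 1 else -1

/-- Output distribution (cosh form). -/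
noncomputable def gc {n : ℕ} (x : Fin n → ℝ) (r : Fin n → ℝ) : ℝ :=
  Real.cosh ((∑ j, r j * Real.log ((1 - x j) / x j)) / 2) *
    ∏ j, Real.sqrt (x j * (1 - x j))

/-- Update field coordinate (tanh form). -/
noncomputable def ft {n : ℕ} (r x : Fin n → ℝ) (i : Fin n) : ℝ :=
  (1/2) * (1 - Real.tanh ((∑ j, r j * Real.log ((1 - x j) / x j)) / 2) * r i) - x i

/-- KL divergence from `g_p` to `g_x` (sum over the hypercube `{±1}^n`). -/
noncomputable def V {n : ℕ} (p x : Fin n → ℝ) : ℝ :=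
  ∑ r : Fin n → Bool, gc p (fun k => sg (r k)) *
    Real.log (gc p (fun k => sg (r k)) / gc x (fun k => sg (r k)))

/-- Mean-field vector field `f_i(x) = E_{R ∼ g_p}[f̃_i(R,x)]`. -/
noncomputable def fvec {n : ℕ} (p x : Fin n → ℝ) (i : Fin n) : ℝ :=
  ∑ r : Fin n → Bool, gc p (fun k => sg (r k)) * ft (fun k => sg (r k)) x i

lemma log_ratio_deriv {n : ℕ} (x : Fin n → ℝ) (hx : ∀ i, x i ∈ Set.Ioo (0:ℝ) 1)
    (i : Fin n) (rr : Fin n → ℝ) (gp : ℝ) (hgp : gp ≠ 0) :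
    HasDerivAt (fun t => Real.log (gp / gc (Function.update x i t) rr))
      (- ft rr x i / (x i * (1 - x i))) (x i) := by
  obtain ⟨ha0, ha1⟩ := hx i
  set a := x i with ha_def
  have ha1' : (0:ℝ) < 1 - a := by linarith
  have hq : (0:ℝ) < a * (1 - a) := mul_pos ha0 ha1'
  set s := rr i with hs_def
  set C := ∑ j ∈ univ.erase i, rr j * Real.log ((1 - x j) / x j) with hC_def
  set K := ∏ j ∈ univ.erase i, Real.sqrt (x j * (1 - x j)) with hK_def
  set Q := Real.sqrt (a * (1 - a)) with hQ_def
  have hQpos : 0 < Q := Real.sqrt_pos.mpr hq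
  have hQ2 : Q * Q = a * (1 - a) := Real.mul_self_sqrt hq.le
  have hKpos : 0 < K := Finset.prod_pos fun j _ =>
    Real.sqrt_pos.mpr (mul_pos (hx j).1 (by linarith [(hx j).2]))
  -- function rewrite
  have hgc : ∀ t, gc (Function.update x i t) rr =
      Real.cosh ((s * Real.log ((1 - t) / t) + C) / 2) * (Real.sqrt (t * (1 - t)) * K) := by
    intro t
    have hsum : (∑ j, rr j * Real.log ((1 - Function.update x i t j) / Function.update x i t j))
        = s * Real.log ((1 - t) / t) + C := by
      rw [← Finset.add_sum_erase _ _ (Finset.mem_univ i), Function.update_self]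
      congr 1
      exact Finset.sum_congr rfl fun j hj => by
        rw [Function.update_of_ne (Finset.ne_of_mem_erase hj)]
    have hprod : (∏ j, Real.sqrt (Function.update x i t j * (1 - Function.update x i t j)))
        = Real.sqrt (t * (1 - t)) * K := by
      rw [← Finset.mul_prod_erase _ _ (Finset.mem_univ i), Function.update_self]
      congr 1
      exact Finset.prod_congr rfl fun j hj => by
        rw [Function.update_of_ne (Finset.ne_of_mem_erase hj)]
    rw [gc, hsum, hprod]
  have hupdate : Function.update x i a = x := Function.update_eq_self i x
  -- x-level sum identity
  have hSx : (∑ j, rr j * Real.log ((1 - x j) / x j)) = s * Real.log ((1 - a) / a) + C := by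
    rw [← Finset.add_sum_erase _ _ (Finset.mem_univ i)]
  set I := (s * Real.log ((1 - a) / a) + C) / 2 with hI_def
  have hgx : gc x rr = Real.cosh I * (Q * K) := by
    rw [← hupdate, hgc a]
  have hch : (0:ℝ) < Real.cosh I := Real.cosh_pos I
  have hgxpos : 0 < gc x rr := by rw [hgx]; positivity
  -- derivative of log((1-t)/t)
  have hl : HasDerivAt (fun t : ℝ => Real.log ((1 - t) / t)) (-(1 / (a * (1 - a)))) a := by
    have h1 : HasDerivAt (fun t : ℝ => (1 - t) / t)
        (((-1) * a - (1 - a) * 1) / a ^ 2) a := by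
      have hnum : HasDerivAt (fun t : ℝ => 1 - t) (-1) a := by
        simpa using (hasDerivAt_const a (1:ℝ)).fun_sub (hasDerivAt_id a)
      exact hnum.div (hasDerivAt_id a) (ne_of_gt ha0)
    have h2 := h1.log (div_ne_zero (by linarith) (ne_of_gt ha0))
    convert h2 using 1
    field_simp
    ring
  have hin : HasDerivAt (fun t : ℝ => (s * Real.log ((1 - t) / t) + C) / 2)
      (s * (-(1 / (a * (1 - a)))) / 2) a := ((hl.const_mul s).add_const C).div_const 2
  have hcosh : HasDerivAt (fun t : ℝ => Real.cosh ((s * Real.log ((1 - t) / t) + C) / 2))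
      (Real.sinh I * (s * (-(1 / (a * (1 - a)))) / 2)) a :=
    by have := (Real.hasDerivAt_cosh I).comp a hin; exact this
  have hv : HasDerivAt (fun t : ℝ => t * (1 - t)) (1 - 2 * a) a := by
    have : HasDerivAt (fun t : ℝ => t * (1 - t)) (1 * (1 - a) + a * (0 - 1)) a :=
      (hasDerivAt_id a).fun_mul ((hasDerivAt_const a (1:ℝ)).fun_sub (hasDerivAt_id a))
    convert this using 1
    ring
  have hsq : HasDerivAt (fun t : ℝ => Real.sqrt (t * (1 - t)))
      ((1 - 2 * a) * Q / (2 * (a * (1 - a)))) a := by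
    have h := hv.sqrt (ne_of_gt hq)
    convert h using 1
    show (1 - 2 * a) * Q / (2 * (a * (1 - a))) = (1 - 2 * a) / (2 * Q)
    rw [← hQ2]
    field_simp
  have hprod' : HasDerivAt (fun t : ℝ => Real.sqrt (t * (1 - t)) * K)
      ((1 - 2 * a) * Q / (2 * (a * (1 - a))) * K) a := hsq.mul_const K
  have hh0 := hcosh.fun_mul hprod'
  have hh : HasDerivAt (fun t => gc (Function.update x i t) rr)
      (Real.sinh I * (s * (-(1 / (a * (1 - a)))) / 2) * (Q * K) +
        Real.cosh I * ((1 - 2 * a) * Q / (2 * (a * (1 - a))) * K)) a := by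
    refine HasDerivAt.congr_of_eventuallyEq ?_ (Filter.Eventually.of_forall fun t => hgc t)
    convert hh0 using 2
  have hdiv := (hasDerivAt_const a gp).fun_div hh (ne_of_gt (by rw [hupdate]; exact hgxpos))
  rw [hupdate] at hdiv
  have hlog := hdiv.log (by rw [hupdate]; exact div_ne_zero hgp (ne_of_gt hgxpos))
  rw [hupdate] at hlog
  convert hlog using 1
  rw [ft, hSx, ← hI_def, Real.tanh_eq_sinh_div_cosh, hgx]
  have hchne : Real.cosh I ≠ 0 := ne_of_gt hch
  field_simp
  ring

lemma gc_pos {n : ℕ} (y : Fin n → ℝ) (hy : ∀ i, y i ∈ Set.Ioo (0:ℝ) 1) (r : Fin n → ℝ) :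
    0 < gc y r := by
  unfold gc
  exact mul_pos (Real.cosh_pos _) (Finset.prod_pos fun j _ =>
    Real.sqrt_pos.mpr (mul_pos (hy j).1 (by linarith [(hy j).2])))

lemma hasDerivAt_V {n : ℕ} (p : Fin n → ℝ) (hp : ∀ i, p i ∈ Set.Ioo (0:ℝ) 1)
    (x : Fin n → ℝ) (hx : ∀ i, x i ∈ Set.Ioo (0:ℝ) 1) (i : Fin n) :
    HasDerivAt (fun t => V p (Function.update x i t))
      (-fvec p x i / (x i * (1 - x i))) (x i) := by
  have h : HasDerivAt (fun t => ∑ r : Fin n → Bool, gc p (fun k => sg (r k)) *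
      Real.log (gc p (fun k => sg (r k)) / gc (Function.update x i t) (fun k => sg (r k))))
      (∑ r : Fin n → Bool, gc p (fun k => sg (r k)) *
        (- ft (fun k => sg (r k)) x i / (x i * (1 - x i)))) (x i) := by
    refine HasDerivAt.fun_sum fun r _ => ?_
    exact (log_ratio_deriv x hx i (fun k => sg (r k)) _
      (ne_of_gt (gc_pos p hp _))).const_mul _
  have heq : -fvec p x i / (x i * (1 - x i)) = ∑ r : Fin n → Bool,
      gc p (fun k => sg (r k)) * (- ft (fun k => sg (r k)) x i / (x i * (1 - x i))) := by
    rw [fvec, neg_div, Finset.sum_div, ← Finset.sum_neg_distrib]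
    exact Finset.sum_congr rfl fun r _ => by ring
  rw [heq]
  exact h

theorem stmt6 (n : ℕ) (p : Fin n → ℝ) (hp : ∀ i, p i ∈ Set.Ioo (0:ℝ) 1)
    (x : Fin n → ℝ) (hx : ∀ i, x i ∈ Set.Ioo (0:ℝ) 1) :
    (∑ i, deriv (fun t => V p (Function.update x i t)) (x i) * fvec p x i)
        = -∑ i, (fvec p x i)^2 / (x i * (1 - x i)) ∧
    (∑ i, deriv (fun t => V p (Function.update x i t)) (x i) * fvec p x i) ≤ 0 ∧
    ((∑ i, deriv (fun t => V p (Function.update x i t)) (x i) * fvec p x i) = 0 ↔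
      ∀ i, fvec p x i = 0) := by
  have hd : ∀ i, x i * (1 - x i) > 0 := fun i =>
    mul_pos (hx i).1 (by linarith [(hx i).2])
  have h1 : (∑ i, deriv (fun t => V p (Function.update x i t)) (x i) * fvec p x i)
      = -∑ i, (fvec p x i)^2 / (x i * (1 - x i)) := by
    rw [← Finset.sum_neg_distrib]
    refine Finset.sum_congr rfl fun i _ => ?_
    rw [(hasDerivAt_V p hp x hx i).deriv]
    ring
  have hnn : ∀ i ∈ Finset.univ, (0:ℝ) ≤ (fvec p x i)^2 / (x i * (1 - x i)) :=
    fun i _ => div_nonneg (sq_nonneg _) (hd i).le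
  refine ⟨h1, ?_, ?_⟩
  · rw [h1]
    exact neg_nonpos.mpr (Finset.sum_nonneg hnn)
  · rw [h1, neg_eq_zero, Finset.sum_eq_zero_iff_of_nonneg hnn]
    constructor
    · intro h i
      have := h i (Finset.mem_univ i)
      rcases div_eq_zero_iff.mp this with h2 | h2
      · exact pow_eq_zero_iff (by norm_num) |>.mp h2
      · exact absurd h2 (hd i).ne'
    · intro h i _
      rw [h i]
      simp
end

section
/- Let π ∈ (0,1)^n with n ≥ 2 and h(a,b) = ab + (1−a)(1−b). For any zero x* ∈ (0,1)^n of the mean-field vector field f and any distinct i, j ∈ [n]: 1 − x*_i − x*_j ≤ h(π_i, π_j), i.e., x*_i + x*_j ≥ h(π_i, 1−π_j). (This follows from averaging f_i(x*)+f_j(x*)=0 and bounding |tanh| ≤ 1: E[tanh(⟨R,ℓ_{x*}⟩/2)(R_i+R_j)/2] ≤ P(R_i = R_j) = h(π_i,π_j), where R ∼ g_π.) -/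
open Real Finset

/-- `h(a,b) = ab + (1-a)(1-b)`. -/
def hh (a b : ℝ) : ℝ := a * b + (1 - a) * (1 - b)

lemma abs_tanh_le_one (y : ℝ) : |Real.tanh y| ≤ 1 := by
  rw [Real.tanh_eq_sinh_div_cosh, abs_div, abs_of_pos (Real.cosh_pos y),
    div_le_one (Real.cosh_pos y), abs_le, Real.sinh_eq, Real.cosh_eq]
  constructor
  · nlinarith [Real.exp_pos y, Real.exp_pos (-y)]
  · nlinarith [Real.exp_pos y, Real.exp_pos (-y)]

lemma factor_eq {p : ℝ} (hp : p ∈ Set.Ioo (0:ℝ) 1) (b : Bool) :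
    Real.exp (sg b * Real.log ((1 - p) / p) / 2) * Real.sqrt (p * (1 - p)) =
      (if b then 1 - p else p) := by
  obtain ⟨h0, h1⟩ := hp
  have h1' : (0:ℝ) < 1 - p := by linarith
  cases b
  · have hneg : (-1 : ℝ) * Real.log ((1 - p) / p) = Real.log (p / (1 - p)) := by
      rw [neg_one_mul, ← Real.log_inv, inv_div]
    have hval : p / (1 - p) * (p * (1 - p)) = p ^ 2 := by field_simp
    simp only [sg, if_false, Bool.false_eq_true]
    rw [hneg, Real.exp_half, Real.exp_log (by positivity),
      ← Real.sqrt_mul (by positivity), hval, Real.sqrt_sq h0.le]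
  · have hval : (1 - p) / p * (p * (1 - p)) = (1 - p) ^ 2 := by field_simp
    simp only [sg, if_true]
    rw [one_mul, Real.exp_half, Real.exp_log (by positivity),
      ← Real.sqrt_mul (by positivity), hval, Real.sqrt_sq h1'.le]

lemma gc_eq {n : ℕ} {p : Fin n → ℝ} (hp : ∀ i, p i ∈ Set.Ioo (0:ℝ) 1) (r : Fin n → Bool) :
    gc p (fun k => sg (r k)) =
      ((∏ k, if r k then 1 - p k else p k) + ∏ k, if r k then p k else 1 - p k) / 2 := by
  have key : ∀ s : Fin n → Bool,
      Real.exp ((∑ j, sg (s j) * Real.log ((1 - p j) / p j)) / 2) *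
        ∏ j, Real.sqrt (p j * (1 - p j)) = ∏ k, if s k then 1 - p k else p k := by
    intro s
    rw [Finset.sum_div, Real.exp_sum, ← Finset.prod_mul_distrib]
    exact Finset.prod_congr rfl fun k _ => factor_eq (hp k) (s k)
  have hneg : -((∑ j, sg (r j) * Real.log ((1 - p j) / p j)) / 2) =
      (∑ j, sg (!(r j)) * Real.log ((1 - p j) / p j)) / 2 := by
    rw [← neg_div]
    congr 1
    rw [← Finset.sum_neg_distrib]
    exact Finset.sum_congr rfl fun k _ => by cases r k <;> simp [sg]
  unfold gc
  rw [Real.cosh_eq, div_mul_eq_mul_div, add_mul, key r, hneg, key (fun k => !(r k))]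
  congr 2
  exact Finset.prod_congr rfl fun k _ => by cases r k <;> simp

lemma sum_bool_prod {n : ℕ} (f : Fin n → Bool → ℝ) :
    ∑ r : Fin n → Bool, ∏ k, f k (r k) = ∏ k, (f k true + f k false) := by
  rw [← Fintype.prod_sum]
  exact Finset.prod_congr rfl fun k _ => by rw [Fintype.sum_bool]

lemma total_one {n : ℕ} (a : Fin n → Bool → ℝ) (h1 : ∀ k, a k true + a k false = 1) :
    ∑ r : Fin n → Bool, ∏ k, a k (r k) = 1 := by
  rw [sum_bool_prod]
  simp [h1]

lemma moment_eq {n : ℕ} (a : Fin n → Bool → ℝ) (h1 : ∀ k, a k true + a k false = 1)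
    (i j : Fin n) (hij : i ≠ j) :
    ∑ r : Fin n → Bool, (∏ k, a k (r k)) * (sg (r i) * sg (r j)) =
      (a i true - a i false) * (a j true - a j false) := by
  have hrw : ∀ r : Fin n → Bool, (∏ k, a k (r k)) * (sg (r i) * sg (r j)) =
      ∏ k, (a k (r k) * ((if k = i then sg (r k) else 1) * (if k = j then sg (r k) else 1))) := by
    intro r
    rw [Finset.prod_mul_distrib, Finset.prod_mul_distrib]
    congr 2
    · simp [Finset.prod_ite_eq']
    · simp [Finset.prod_ite_eq']
  simp only [hrw]
  rw [sum_bool_prod (fun k b => a k b * ((if k = i then sg b else 1) * (if k = j then sg b else 1)))]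
  rw [← Finset.prod_mul_prod_compl ({i, j} : Finset (Fin n))]
  have h2 : ∀ k ∈ ({i, j} : Finset (Fin n))ᶜ,
      (a k true * ((if k = i then sg true else 1) * (if k = j then sg true else 1)) +
       a k false * ((if k = i then sg false else 1) * (if k = j then sg false else 1))) = 1 := by
    intro k hk
    simp only [Finset.mem_compl, Finset.mem_insert, Finset.mem_singleton, not_or] at hk
    simp [hk.1, hk.2, h1 k]
  rw [Finset.prod_eq_one h2, mul_one, Finset.prod_pair hij]
  simp [sg, hij, hij.symm]
  ring

lemma hD_gen {n : ℕ} (p x : Fin n → ℝ) (i : Fin n) (hzi : fvec p x i = 0)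
    (hg1 : ∑ r : Fin n → Bool, gc p (fun k => sg (r k)) = 1) :
    ∑ r : Fin n → Bool, gc p (fun k => sg (r k)) *
      (Real.tanh ((∑ j, sg (r j) * Real.log ((1 - x j) / x j)) / 2) * sg (r i)) = 1 - 2 * x i := by
  simp only [fvec, ft] at hzi
  have e1 : ∑ r : Fin n → Bool, gc p (fun k => sg (r k)) *
      ((1/2) * (1 - Real.tanh ((∑ j, sg (r j) * Real.log ((1 - x j) / x j)) / 2) * sg (r i)) - x i)
      = (1/2 - x i) * (∑ r : Fin n → Bool, gc p (fun k => sg (r k)))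
        - (1/2) * ∑ r : Fin n → Bool, gc p (fun k => sg (r k)) *
          (Real.tanh ((∑ j, sg (r j) * Real.log ((1 - x j) / x j)) / 2) * sg (r i)) := by
    rw [Finset.mul_sum, Finset.mul_sum, ← Finset.sum_sub_distrib]
    exact Finset.sum_congr rfl fun r _ => by ring
  rw [e1, hg1] at hzi
  linarith

theorem stmt8 (n : ℕ) (hn : 2 ≤ n) (p : Fin n → ℝ) (hp : ∀ i, p i ∈ Set.Ioo (0:ℝ) 1)
    (x : Fin n → ℝ) (hx : ∀ i, x i ∈ Set.Ioo (0:ℝ) 1)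
    (hzero : ∀ i, fvec p x i = 0) (i j : Fin n) (hij : i ≠ j) :
    1 - x i - x j ≤ hh (p i) (p j) ∧ hh (p i) (1 - p j) ≤ x i + x j := by
  classical
  set g : (Fin n → Bool) → ℝ := fun r => gc p (fun k => sg (r k)) with hg
  set A : (Fin n → Bool) → ℝ := fun r =>
    Real.tanh ((∑ j, sg (r j) * Real.log ((1 - x j) / x j)) / 2) with hA
  set Q : (Fin n → Bool) → ℝ := fun r => ∏ k, if r k then 1 - p k else p k with hQ
  set Q' : (Fin n → Bool) → ℝ := fun r => ∏ k, if r k then p k else 1 - p k with hQ'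
  have hgeq : ∀ r, g r = (Q r + Q' r) / 2 := fun r => gc_eq hp r
  have hgnn : ∀ r, 0 ≤ g r := by
    intro r
    have := Real.cosh_pos ((∑ j, sg (r j) * Real.log ((1 - p j) / p j)) / 2)
    exact mul_nonneg this.le (Finset.prod_nonneg fun k _ => Real.sqrt_nonneg _)
  -- normalization
  have hQ1 : ∑ r : Fin n → Bool, Q r = 1 :=
    total_one (fun k b => if b then 1 - p k else p k) (fun k => by simp)
  have hQ'1 : ∑ r : Fin n → Bool, Q' r = 1 :=
    total_one (fun k b => if b then p k else 1 - p k) (fun k => by simp)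
  have hg1 : ∑ r : Fin n → Bool, g r = 1 := by
    simp only [hgeq]
    rw [← Finset.sum_div, Finset.sum_add_distrib, hQ1, hQ'1]
    norm_num
  -- correlation moments
  have hM : ∑ r : Fin n → Bool, Q r * (sg (r i) * sg (r j)) = (1 - 2 * p i) * (1 - 2 * p j) := by
    have := moment_eq (fun k b => if b then 1 - p k else p k)
      (fun k => by simp) i j hij
    rw [hQ]
    rw [this]
    norm_num
    ring
  have hM' : ∑ r : Fin n → Bool, Q' r * (sg (r i) * sg (r j)) = (1 - 2 * p i) * (1 - 2 * p j) := by
    have := moment_eq (fun k b => if b then p k else 1 - p k)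
      (fun k => by simp) i j hij
    rw [hQ']
    rw [this]
    norm_num
    ring
  -- P(R_i = R_j)
  have hc : ∑ r : Fin n → Bool, g r * ((1 + sg (r i) * sg (r j)) / 2) = hh (p i) (p j) := by
    have hrw : ∀ r : Fin n → Bool, g r * ((1 + sg (r i) * sg (r j)) / 2) =
        (Q r + Q' r + Q r * (sg (r i) * sg (r j)) + Q' r * (sg (r i) * sg (r j))) / 4 := by
      intro r; rw [hgeq r]; ring
    simp only [hrw]
    rw [← Finset.sum_div, Finset.sum_add_distrib, Finset.sum_add_distrib,
      Finset.sum_add_distrib, hQ1, hQ'1, hM, hM']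
    unfold hh; ring
  -- zero condition gives moments of tanh
  have hD : ∀ k : Fin n, ∑ r : Fin n → Bool, g r * (A r * sg (r k)) = 1 - 2 * x k :=
    fun k => hD_gen p x k (hzero k) hg1
  -- E = 1 - x i - x j
  have hE : ∑ r : Fin n → Bool, g r * (A r * ((sg (r i) + sg (r j)) / 2)) = 1 - x i - x j := by
    have hrw : ∀ r : Fin n → Bool, g r * (A r * ((sg (r i) + sg (r j)) / 2)) =
        (g r * (A r * sg (r i)) + g r * (A r * sg (r j))) / 2 := by
      intro r; ring
    rw [Finset.sum_congr rfl fun r _ => hrw r, ← Finset.sum_div, Finset.sum_add_distrib,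
      hD i, hD j]
    ring
  -- bound
  have hbound : |∑ r : Fin n → Bool, g r * (A r * ((sg (r i) + sg (r j)) / 2))| ≤ hh (p i) (p j) := by
    calc |∑ r : Fin n → Bool, g r * (A r * ((sg (r i) + sg (r j)) / 2))|
        ≤ ∑ r : Fin n → Bool, |g r * (A r * ((sg (r i) + sg (r j)) / 2))| :=
          Finset.abs_sum_le_sum_abs _ _
      _ ≤ ∑ r : Fin n → Bool, g r * ((1 + sg (r i) * sg (r j)) / 2) := by
          apply Finset.sum_le_sum
          intro r _
          have habs : |(sg (r i) + sg (r j)) / 2| = (1 + sg (r i) * sg (r j)) / 2 := by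
            cases hri : r i <;> cases hrj : r j <;> norm_num [sg]
          rw [abs_mul, abs_mul, abs_of_nonneg (hgnn r), habs]
          have h1 : |A r| ≤ 1 := abs_tanh_le_one _
          have h2 : (0:ℝ) ≤ (1 + sg (r i) * sg (r j)) / 2 := by
            cases hri : r i <;> cases hrj : r j <;> norm_num [sg]
          exact mul_le_mul_of_nonneg_left (mul_le_of_le_one_left h2 h1) (hgnn r)
      _ = hh (p i) (p j) := hc
  rw [hE] at hbound
  rw [abs_le] at hbound
  constructor
  · linarith [hbound.2]
  · have : hh (p i) (1 - p j) = 1 - hh (p i) (p j) := by unfold hh; ring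
    rw [this]; linarith [hbound.1]
end
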